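/- Let m ≥ 1 be an integer. Let r ≥ s ≥ 1 be integers, let a_1, …, a_r be distinct real numbers in the open interval (0, 1/2) such that a_1, …, a_s are irrational and a_{s+1}, …, a_r are rational, and let c_1, …, c_r be nonzero real numbers. Set σ = ∑_{i=1}^r c_i S_{a_i}. If for every integer p > 1 coprime to both m and m+1 one has Σ_p(σ) = ∑_{i=1}^{p−1} σ(i/p) = 0, then the real numbers a_1, …, a_s, 1 are linearly dependent over ℚ; that is, there exist rational numbers q_1, …, q_s, q_0, not all zero, with q_1 a_1 + ⋯ + q_s a_s + q_0 = 0. -/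

import Mathlib

/-- The characteristic-type function `χ_a`: value `1` on `[0,a)`, `1/2` at `a`, `0` after. -/
noncomputable def chiFn (a : ℝ) : ℝ → ℝ := fun x =>
  if x < a then 1 else if x = a then 1 / 2 else 0

/-- The symmetric jump function `S_a = χ_{1−a} − χ_a`. -/
noncomputable def SFn (a : ℝ) : ℝ → ℝ := fun x => chiFn (1 - a) x - chiFn a x

/-- `Σ_p(f) = ∑_{i=1}^{p−1} f(i/p)`. -/
noncomputable def SigmaP (p : ℕ) (f : ℝ → ℝ) : ℝ :=
  ∑ i ∈ Finset.Ico 1 p, f ((i : ℝ) / (p : ℝ))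

section KronTools
open Complex Finset

noncomputable def ee (x : ℝ) : ℂ := Complex.exp (2 * Real.pi * x * Complex.I)

lemma ee_add (x y : ℝ) : ee (x + y) = ee x * ee y := by
  simp only [ee, ← Complex.exp_add]; congr 1; push_cast; ring

lemma ee_zero : ee 0 = 1 := by simp [ee]

lemma ee_int (z : ℤ) : ee z = 1 := by
  simpa [ee, mul_comm, mul_assoc, mul_left_comm] using Complex.exp_int_mul_two_pi_mul_I z

lemma ee_nat_mul (v : ℕ) (x : ℝ) : ee ((v : ℝ) * x) = ee x ^ v := by
  rw [ee, ee, ← Complex.exp_nat_mul]; congr 1; push_cast; ring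

lemma ee_norm (x : ℝ) : ‖ee x‖ = 1 := by
  rw [ee, Complex.norm_exp]
  simp

lemma ee_conj (x : ℝ) : (starRingEnd ℂ) (ee x) = ee (-x) := by
  rw [ee, ← Complex.exp_conj]
  congr 1
  simp only [map_mul, Complex.conj_I, Complex.conj_ofReal, map_ofNat]
  push_cast
  ring

lemma ee_eq_one_iff (x : ℝ) : ee x = 1 ↔ ∃ z : ℤ, x = (z : ℝ) := by
  rw [ee, Complex.exp_eq_one_iff]
  constructor
  · rintro ⟨n, hn⟩
    refine ⟨n, ?_⟩
    have hπ : (2 * (Real.pi:ℂ) * Complex.I) ≠ 0 := by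
      simp [Real.pi_ne_zero, Complex.I_ne_zero]
    have : (x : ℂ) * (2 * (Real.pi:ℂ) * Complex.I) = (n:ℂ) * (2 * (Real.pi:ℂ) * Complex.I) := by
      rw [← hn]; ring
    have := mul_right_cancel₀ hπ this
    exact_mod_cast this
  · rintro ⟨z, rfl⟩
    exact ⟨z, by push_cast; ring⟩

lemma ee_sub_one_norm (x : ℝ) : ‖ee x - 1‖ = 2 * |Real.sin (Real.pi * x)| := by
  have h1 : ee x = ee (x/2) * ee (x/2) := by rw [← ee_add]; ring_nf
  have h2 : ee (x/2) * ee (-(x/2)) = 1 := by rw [← ee_add]; simp [ee_zero]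
  have h3 : ee x - 1 = ee (x/2) * (ee (x/2) - ee (-(x/2))) := by
    rw [mul_sub, ← h1, h2]
  have h4 : ee (x/2) - ee (-(x/2)) = 2 * Complex.I * Real.sin (Real.pi * x) := by
    have e1 : ee (x/2) = Complex.exp ((Real.pi * x : ℝ) * Complex.I) := by
      rw [ee]; congr 1; push_cast; ring
    have e2 : ee (-(x/2)) = Complex.exp (-((Real.pi * x : ℝ)) * Complex.I) := by
      rw [ee]; congr 1; push_cast; ring
    rw [e1, e2, Complex.exp_mul_I, Complex.exp_mul_I]
    simp only [Complex.ofReal_neg, Complex.cos_neg, Complex.sin_neg, ← Complex.ofReal_sin]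
    ring
  rw [h3, norm_mul, ee_norm, one_mul, h4]
  rw [norm_mul, norm_mul]
  simp only [Complex.norm_real, Complex.norm_I, Complex.norm_two, Real.norm_eq_abs]
  ring

lemma sin_lower (u : ℝ) (ε : ℝ) (hε : 0 < ε) (hu0 : ε ≤ u) (hu1 : u ≤ 1 - ε) :
    2 * ε ≤ Real.sin (Real.pi * u) := by
  have hπ := Real.pi_pos
  rcases le_or_gt u (1/2) with hu | hu
  · have := Real.mul_le_sin (x := Real.pi * u) (by nlinarith) (by nlinarith)
    have he : 2 / Real.pi * (Real.pi * u) = 2 * u := by field_simp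
    rw [he] at this
    linarith
  · have h1 : Real.sin (Real.pi * u) = Real.sin (Real.pi * (1 - u)) := by
      rw [← Real.sin_pi_sub]; ring_nf
    have hε1 : ε ≤ 1 - u := by linarith
    have := Real.mul_le_sin (x := Real.pi * (1 - u)) (by nlinarith) (by nlinarith)
    have he : 2 / Real.pi * (Real.pi * (1 - u)) = 2 * (1 - u) := by field_simp
    rw [he] at this
    rw [h1]
    linarith

lemma ee_sub_one_lower (x : ℝ) (ε : ℝ) (hε : 0 < ε) (hε2 : ε ≤ 1/2)
    (hx : ∀ z : ℤ, ε ≤ |x - (z : ℝ)|) : 4 * ε ≤ ‖ee x - 1‖ := by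
  have hfr : ee x = ee (Int.fract x) := by
    have hh : x = Int.fract x + (⌊x⌋ : ℝ) := by rw [Int.fract]; ring
    nth_rewrite 1 [hh]
    rw [ee_add, ee_int, mul_one]
  have hfx : x - (⌊x⌋:ℝ) = Int.fract x := rfl
  have h1 : ε ≤ Int.fract x := by
    have := hx ⌊x⌋
    rwa [hfx, _root_.abs_of_nonneg (Int.fract_nonneg x)] at this
  have h2 : Int.fract x ≤ 1 - ε := by
    have := hx (⌊x⌋ + 1)
    have h3 : |x - ((⌊x⌋ + 1 : ℤ) : ℝ)| = 1 - Int.fract x := by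
      push_cast
      rw [show x - ((⌊x⌋:ℝ) + 1) = Int.fract x - 1 by rw [← hfx]; ring]
      rw [_root_.abs_of_nonpos (by linarith [Int.fract_lt_one x])]
      ring
    rw [h3] at this; linarith
  rw [hfr, ee_sub_one_norm]
  have := sin_lower (Int.fract x) ε hε h1 h2
  rw [_root_.abs_of_nonneg (by linarith)]
  linarith

lemma geom_bound (z : ℂ) (hz : ‖z‖ = 1) (N : ℕ) (hz1 : z ≠ 1) :
    ‖∑ k ∈ Finset.Icc 1 N, z ^ k‖ ≤ 2 / ‖z - 1‖ := by
  have key : (∑ k ∈ Finset.Icc 1 N, z ^ k) * (z - 1) = z ^ (N + 1) - z := by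
    have h1 : ∑ k ∈ Finset.range (N + 1), z ^ k = 1 + ∑ k ∈ Finset.Icc 1 N, z ^ k := by
      rw [Finset.range_eq_Ico, ← Finset.sum_Ico_consecutive (fun k => z ^ k)
        (Nat.zero_le 1) (Nat.le_add_left 1 N)]
      congr 1
      · simp
    have h2 := geom_sum_mul z (N + 1)
    rw [h1] at h2
    ring_nf at h2 ⊢
    linear_combination h2
  have hz0 : 0 < ‖z - 1‖ := by
    rw [norm_pos_iff, sub_ne_zero]; exact hz1
  rw [le_div_iff₀ hz0]
  calc ‖∑ k ∈ Finset.Icc 1 N, z ^ k‖ * ‖z - 1‖ = ‖z ^ (N+1) - z‖ := by rw [← norm_mul, key]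
  _ ≤ ‖z ^ (N+1)‖ + ‖z‖ := norm_sub_le _ _
  _ = 2 := by rw [norm_pow, hz]; norm_num
open Complex Finset

lemma count_pairs (m n : ℕ) :
    ((((n:ℝ)+1)^m)^2 : ℝ) ≤
      (((Fintype.piFinset (fun _ : Fin m => Finset.range (n+1))) ×ˢ
        (Fintype.piFinset (fun _ : Fin m => Finset.range (n+1)))).filter
        (fun p => (∑ t, p.1 t) = ∑ t, p.2 t)).card * ((m*n+1 : ℕ) : ℝ) := by
  classical
  set G := Fintype.piFinset (fun _ : Fin m => Finset.range (n+1)) with hGdef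
  set σ : (Fin m → ℕ) → ℕ := fun α => ∑ t, α t with hσdef
  have hσmem : ∀ α ∈ G, σ α ∈ Finset.range (m*n+1) := by
    intro α hα
    rw [Finset.mem_range, Nat.lt_succ_iff]
    calc σ α ≤ ∑ _t : Fin m, n := by
          apply Finset.sum_le_sum
          intro t _
          have := (Fintype.mem_piFinset.mp hα) t
          rw [Finset.mem_range, Nat.lt_succ_iff] at this
          exact this
    _ = m * n := by simp [Finset.sum_const, mul_comm]
  set N : ℕ → ℕ := fun t => (G.filter (fun α => σ α = t)).card with hNdef
  have hGcard : G.card = (n+1)^m := by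
    rw [hGdef, Fintype.card_piFinset]
    simp
  have h1 : G.card = ∑ t ∈ Finset.range (m*n+1), N t :=
    Finset.card_eq_sum_card_fiberwise hσmem
  have h2 : ((G ×ˢ G).filter (fun p => σ p.1 = σ p.2)).card
      = ∑ t ∈ Finset.range (m*n+1), (N t)^2 := by
    have hmem2 : ∀ p ∈ (G ×ˢ G).filter (fun p => σ p.1 = σ p.2),
        σ p.1 ∈ Finset.range (m*n+1) := by
      intro p hp
      rw [Finset.mem_filter, Finset.mem_product] at hp
      exact hσmem _ hp.1.1
    rw [Finset.card_eq_sum_card_fiberwise hmem2]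
    apply Finset.sum_congr rfl
    intro t _
    have : ((G ×ˢ G).filter (fun p => σ p.1 = σ p.2)).filter (fun p => σ p.1 = t)
        = (G.filter (fun α => σ α = t)) ×ˢ (G.filter (fun α => σ α = t)) := by
      ext p
      simp only [Finset.mem_filter, Finset.mem_product]
      constructor
      · rintro ⟨⟨⟨h1, h2⟩, h3⟩, h4⟩
        exact ⟨⟨h1, h4⟩, ⟨h2, by rw [← h3]; exact h4⟩⟩
      · rintro ⟨⟨h1, h2⟩, h3, h4⟩
        exact ⟨⟨⟨h1, h3⟩, by rw [h2, h4]⟩, h2⟩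
    rw [this, Finset.card_product, sq]
  have hCS := Finset.sum_mul_sq_le_sq_mul_sq (Finset.range (m*n+1))
    (fun _ => (1:ℝ)) (fun t => (N t : ℝ))
  simp only [one_mul, one_pow, Finset.sum_const, Finset.card_range, nsmul_eq_mul, mul_one] at hCS
  have hcast1 : ((n:ℝ)+1)^m = ((G.card : ℕ) : ℝ) := by
    rw [hGcard]; push_cast; ring
  rw [hcast1, h1]
  push_cast
  calc (∑ t ∈ Finset.range (m*n+1), (N t:ℝ))^2
      ≤ (m*n+1 : ℝ) * ∑ t ∈ Finset.range (m*n+1), (N t:ℝ)^2 := by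
        have : ((m*n+1 : ℕ):ℝ) = (m*n+1 : ℝ) := by push_cast; ring
        rw [← this]
        exact hCS
  _ = (((G ×ˢ G).filter (fun p => σ p.1 = σ p.2)).card : ℝ) * (m*n+1 : ℝ) := by
        rw [h2]; push_cast; ring

lemma ee_sum {ι : Type*} (s : Finset ι) (f : ι → ℝ) :
    ee (∑ i ∈ s, f i) = ∏ i ∈ s, ee (f i) := by
  classical
  induction s using Finset.cons_induction with
  | empty => simp [ee_zero]
  | cons i s hi ih => rw [Finset.sum_cons, Finset.prod_cons, ee_add, ih]


lemma kron (s : ℕ) (hs : 0 < s) (b w : Fin s → ℝ)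
    (hb : ∀ d : Fin s → ℤ, d ≠ 0 → ∀ z : ℤ, (∑ j, (d j : ℝ) * b j) ≠ (z:ℝ))
    (ε : ℝ) (hε : 0 < ε) (hε2 : ε ≤ 1/2) :
    ∃ k : ℕ, 1 ≤ k ∧ ∀ j, ∃ z : ℤ, |(k:ℝ) * b j - w j - (z:ℝ)| < ε := by
  classical
  by_contra hcon
  push_neg at hcon
  -- hcon : ∀ (k : ℕ), 1 ≤ k → ∃ j, ∀ (z : ℤ), ε ≤ |↑k * b j - w j - ↑z|
  set m : ℕ := s + 1 with hmdef
  have hEpos : (0:ℝ) < (2*ε)^(2*m) := by positivity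
  obtain ⟨n, hn⟩ := exists_nat_gt (((s:ℝ)+1)^s / (2*ε)^(2*m))
  -- key inequality
  have hn1 : (0:ℝ) < (n:ℝ) + 1 := by positivity
  have key : (((m:ℝ)*n+1))^s < ((2*ε)*((n:ℝ)+1))^(2*m) := by
    have h1 : (((m:ℝ)*n+1))^s ≤ (((s:ℝ)+1)*((n:ℝ)+1))^s := by
      apply pow_le_pow_left₀ (by positivity)
      rw [hmdef]; push_cast; nlinarith [Nat.cast_nonneg (α := ℝ) n]
    have h2 : ((s:ℝ)+1)^s < (2*ε)^(2*m) * ((n:ℝ)+1) := by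
      rw [div_lt_iff₀ hEpos] at hn
      nlinarith
    have h3 : ((n:ℝ)+1) ≤ ((n:ℝ)+1)^(m+1) := by
      apply le_self_pow₀ (by linarith) (by omega)
    calc (((m:ℝ)*n+1))^s ≤ (((s:ℝ)+1)*((n:ℝ)+1))^s := h1
    _ = ((s:ℝ)+1)^s * ((n:ℝ)+1)^s := by rw [mul_pow]
    _ < ((2*ε)^(2*m) * ((n:ℝ)+1)) * ((n:ℝ)+1)^s := by
        apply mul_lt_mul_of_pos_right h2 (by positivity)
    _ ≤ ((2*ε)^(2*m) * ((n:ℝ)+1)^(m+1)) * ((n:ℝ)+1)^s := by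
        have := mul_le_mul_of_nonneg_left h3 (le_of_lt hEpos)
        apply mul_le_mul_of_nonneg_right _ (by positivity)
        exact this
    _ = (2*ε)^(2*m) * ((n:ℝ)+1)^(2*m) := by
        rw [mul_assoc, ← pow_add]
        congr 2
        omega
    _ = ((2*ε)*((n:ℝ)+1))^(2*m) := by rw [mul_pow (2*ε) ((n:ℝ)+1)]
  -- setup
  set θ : Fin s → ℕ → ℝ := fun j k => (k:ℝ) * b j - w j with hθdef
  set g : Fin s → ℕ → ℂ := fun j k => ∑ v ∈ Finset.range (n+1), ee ((v:ℝ) * θ j k) with hgdef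
  set hf : ℕ → ℝ := fun k => ∏ j, (Complex.normSq (g j k))^m with hhdef
  have hgnorm : ∀ j k, ‖g j k‖ ≤ (n:ℝ)+1 := by
    intro j k
    calc ‖g j k‖ ≤ ∑ v ∈ Finset.range (n+1), ‖ee ((v:ℝ) * θ j k)‖ := norm_sum_le _ _
    _ = (n:ℝ)+1 := by
        simp only [ee_norm, Finset.sum_const, Finset.card_range, nsmul_eq_mul, mul_one]
        push_cast
        ring
  have hnormSq_eq : ∀ (z : ℂ), Complex.normSq z = ‖z‖^2 := by
    intro z; rw [Complex.normSq_eq_norm_sq]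
  have hf_nonneg : ∀ k, 0 ≤ hf k := by
    intro k
    apply Finset.prod_nonneg
    intro j _
    exact pow_nonneg (Complex.normSq_nonneg _) _
  -- upper bound on bad k
  set U : ℝ := ((1/(2*ε))^2)^m * ((((n:ℝ)+1)^2)^(m*(s-1))) with hUdef
  have hupp : ∀ k, 1 ≤ k → hf k ≤ U := by
    intro k hk
    obtain ⟨j₀, hj₀⟩ := hcon k hk
    have hnear : 4*ε ≤ ‖ee (θ j₀ k) - 1‖ := by
      apply ee_sub_one_lower _ _ hε hε2
      intro z
      exact hj₀ z
    have hgj₀ : ‖g j₀ k‖ ≤ 1/(2*ε) := by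
      have hgeom : g j₀ k * (ee (θ j₀ k) - 1) = ee (θ j₀ k)^(n+1) - 1 := by
        rw [hgdef]
        simp only
        rw [show (∑ v ∈ Finset.range (n+1), ee ((v:ℝ) * θ j₀ k))
            = ∑ v ∈ Finset.range (n+1), (ee (θ j₀ k))^v from
          Finset.sum_congr rfl (fun v _ => ee_nat_mul v (θ j₀ k))]
        exact geom_sum_mul _ _
      have h2 : ‖g j₀ k‖ * ‖ee (θ j₀ k) - 1‖ ≤ 2 := by
        rw [← norm_mul, hgeom]
        calc ‖ee (θ j₀ k)^(n+1) - 1‖ ≤ ‖ee (θ j₀ k)^(n+1)‖ + ‖(1:ℂ)‖ := norm_sub_le _ _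
        _ = 2 := by rw [norm_pow, ee_norm]; norm_num
      have h4 : ‖g j₀ k‖ * (4*ε) ≤ 2 :=
        le_trans (mul_le_mul_of_nonneg_left hnear (norm_nonneg _)) h2
      rw [le_div_iff₀ (by positivity)]
      nlinarith
    rw [hhdef]
    simp only
    rw [← Finset.mul_prod_erase Finset.univ _ (Finset.mem_univ j₀), hUdef]
    apply mul_le_mul
    · apply pow_le_pow_left₀ (Complex.normSq_nonneg _)
      rw [hnormSq_eq]
      apply pow_le_pow_left₀ (norm_nonneg _) hgj₀
    · calc ∏ j ∈ Finset.univ.erase j₀, (Complex.normSq (g j k))^m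
          ≤ ∏ _j ∈ Finset.univ.erase j₀, ((((n:ℝ)+1)^2)^m) := by
            apply Finset.prod_le_prod
            · intro j _; exact pow_nonneg (Complex.normSq_nonneg _) _
            · intro j _
              apply pow_le_pow_left₀ (Complex.normSq_nonneg _)
              rw [hnormSq_eq]
              apply pow_le_pow_left₀ (norm_nonneg _) (hgnorm j k)
      _ = ((((n:ℝ)+1)^2)^(m*(s-1))) := by
            rw [Finset.prod_const, Finset.card_erase_of_mem (Finset.mem_univ j₀)]
            rw [← pow_mul, Finset.card_univ, Fintype.card_fin]
    · apply Finset.prod_nonneg; intro j _; exact pow_nonneg (Complex.normSq_nonneg _) _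
    · positivity
  -- expansion
  set G : Finset (Fin m → ℕ) := Fintype.piFinset (fun _ : Fin m => Finset.range (n+1)) with hGdef
  set σf : (Fin m → ℕ) → ℕ := fun α => ∑ t, α t with hσdef
  set P : Finset ((Fin m → ℕ) × (Fin m → ℕ)) := G ×ˢ G with hPdef
  set dd : ((Fin m → ℕ) × (Fin m → ℕ)) → ℤ := fun q => (σf q.1 : ℤ) - σf q.2 with hdddef
  set Pi : Finset (Fin s → ((Fin m → ℕ) × (Fin m → ℕ))) :=
    Fintype.piFinset (fun _ : Fin s => P) with hPidef
  have claim1 : ∀ j k, ((Complex.normSq (g j k) : ℝ) : ℂ)^m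
      = ∑ q ∈ P, ee ((dd q : ℝ) * θ j k) := by
    intro j k
    have hpow : ∀ (γ : ℝ → ℝ), (∑ v ∈ Finset.range (n+1), ee (γ (v:ℝ) * θ j k))^m
        = ∑ α ∈ G, ee ((∑ t, γ (α t)) * θ j k) := by
      intro γ
      have hxp : ∀ x : ℂ, x ^ m = ∏ _t : Fin m, x := by
        intro x; simp
      rw [hxp, Finset.prod_univ_sum (fun _ : Fin m => Finset.range (n+1))
        (fun _ v => ee (γ (v:ℝ) * θ j k))]
      apply Finset.sum_congr rfl
      intro α _
      rw [Finset.sum_mul, ee_sum]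
    have hgm : (g j k)^m = ∑ α ∈ G, ee ((σf α : ℝ) * θ j k) := by
      rw [hgdef]
      simp only
      have := hpow id
      simp only [id] at this
      rw [this]
      apply Finset.sum_congr rfl
      intro α _
      congr 2
      rw [hσdef]
      push_cast
      ring
    have hconj : (starRingEnd ℂ) (g j k) = ∑ v ∈ Finset.range (n+1), ee (-((v:ℝ)) * θ j k) := by
      rw [hgdef]
      simp only
      rw [map_sum]
      apply Finset.sum_congr rfl
      intro v _
      rw [ee_conj]
      congr 1
      ring
    have hgcm : ((starRingEnd ℂ) (g j k))^m = ∑ β ∈ G, ee (-(σf β : ℝ) * θ j k) := by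
      rw [hconj]
      have := hpow (fun x => -x)
      rw [this]
      apply Finset.sum_congr rfl
      intro β _
      congr 2
      rw [hσdef]
      push_cast
      rw [← Finset.sum_neg_distrib]
    have hms : ((Complex.normSq (g j k) : ℝ) : ℂ)^m = (g j k)^m * ((starRingEnd ℂ) (g j k))^m := by
      rw [← mul_pow, Complex.mul_conj]
    rw [hms, hgm, hgcm, Finset.sum_mul_sum, hPdef]
    rw [Finset.sum_product]
    apply Finset.sum_congr rfl
    intro α _
    apply Finset.sum_congr rfl
    intro β _
    rw [← ee_add]
    congr 1
    rw [hdddef]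
    push_cast
    ring

  have claim2 : ∀ k, ((hf k : ℝ) : ℂ) = ∑ A ∈ Pi, ee (∑ j, (dd (A j) : ℝ) * θ j k) := by
    intro k
    have h1 : ((hf k : ℝ) : ℂ) = ∏ j, ((Complex.normSq (g j k) : ℝ) : ℂ)^m := by
      rw [hhdef]; push_cast; rfl
    rw [h1, Finset.prod_congr rfl (fun j _ => claim1 j k)]
    rw [Finset.prod_univ_sum (fun _ : Fin s => P) (fun j q => ee ((dd q:ℝ) * θ j k))]
    exact Finset.sum_congr rfl (fun A _ => (ee_sum _ _).symm)
  set β : (Fin s → ((Fin m → ℕ) × (Fin m → ℕ))) → ℝ :=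
    fun A => ∑ j, (dd (A j) : ℝ) * b j with hβdef
  set W : (Fin s → ((Fin m → ℕ) × (Fin m → ℕ))) → ℝ :=
    fun A => ∑ j, (dd (A j) : ℝ) * w j with hWdef
  have claim3 : ∀ A k, (∑ j, (dd (A j) : ℝ) * θ j k) = (k:ℝ) * β A - W A := by
    intro A k
    rw [hβdef, hWdef, hθdef]
    simp only
    rw [Finset.mul_sum, ← Finset.sum_sub_distrib]
    exact Finset.sum_congr rfl (fun j _ => by ring)
  have main : ∀ N : ℕ, ((∑ k ∈ Finset.Icc 1 N, hf k : ℝ) : ℂ)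
      = ∑ A ∈ Pi, ee (-(W A)) * (∑ k ∈ Finset.Icc 1 N, (ee (β A))^k) := by
    intro N
    push_cast
    rw [Finset.sum_congr rfl (fun k _ => claim2 k)]
    rw [Finset.sum_comm]
    apply Finset.sum_congr rfl
    intro A _
    rw [Finset.mul_sum]
    apply Finset.sum_congr rfl
    intro k _
    rw [claim3, ← ee_nat_mul, ← ee_add]
    congr 1
    ring
  set good : Finset (Fin s → ((Fin m → ℕ) × (Fin m → ℕ))) :=
    Pi.filter (fun A => ∀ j, dd (A j) = 0) with hgooddef
  set Rstar : ℝ :=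
    ∑ A ∈ Pi.filter (fun A => ¬ ∀ j, dd (A j) = 0), 2/‖ee (β A) - 1‖ with hRdef
  have hRnonneg : 0 ≤ Rstar := by
    rw [hRdef]
    apply Finset.sum_nonneg
    intro A _
    positivity
  have main2 : ∀ N : ℕ, |(∑ k ∈ Finset.Icc 1 N, hf k) - (good.card : ℝ) * N| ≤ Rstar := by
    intro N
    have h0 := main N
    rw [← Finset.sum_filter_add_sum_filter_not Pi (fun A => ∀ j, dd (A j) = 0)] at h0
    have hgood : ∑ A ∈ good, ee (-(W A)) * (∑ k ∈ Finset.Icc 1 N, (ee (β A))^k)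
        = (good.card : ℂ) * (N : ℂ) := by
      have hterm : ∀ A ∈ good, ee (-(W A)) * (∑ k ∈ Finset.Icc 1 N, (ee (β A))^k) = (N:ℂ) := by
        intro A hA
        rw [hgooddef, Finset.mem_filter] at hA
        have hz : ∀ j, (dd (A j):ℝ) = 0 := fun j => by rw [hA.2 j]; simp
        have hβ0 : β A = 0 := by
          rw [hβdef]; exact Finset.sum_eq_zero (fun j _ => by rw [hz j, zero_mul])
        have hW0 : W A = 0 := by
          rw [hWdef]; exact Finset.sum_eq_zero (fun j _ => by rw [hz j, zero_mul])
        rw [hβ0, hW0, neg_zero, ee_zero, one_mul]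
        simp
      rw [Finset.sum_congr rfl hterm, Finset.sum_const, nsmul_eq_mul]
    rw [hgood] at h0
    have hbad : ‖∑ A ∈ Pi.filter (fun A => ¬ ∀ j, dd (A j) = 0),
        ee (-(W A)) * (∑ k ∈ Finset.Icc 1 N, (ee (β A))^k)‖ ≤ Rstar := by
      refine le_trans (norm_sum_le _ _) ?_
      rw [hRdef]
      apply Finset.sum_le_sum
      intro A hA
      rw [Finset.mem_filter] at hA
      obtain ⟨hA1, hA2⟩ := hA
      push_neg at hA2
      obtain ⟨j', hj'⟩ := hA2
      have hd : (fun j => dd (A j)) ≠ 0 := by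
        intro hzero
        exact hj' (congrFun hzero j')
      have hβint := hb _ hd
      have hone : ee (β A) ≠ 1 := by
        intro h1
        rw [ee_eq_one_iff] at h1
        obtain ⟨z, hz⟩ := h1
        exact hβint z hz
      rw [norm_mul, ee_norm, one_mul]
      exact geom_bound _ (ee_norm _) N hone
    have heq : ((∑ k ∈ Finset.Icc 1 N, hf k) - (good.card : ℝ) * N : ℝ) =
        ((∑ A ∈ Pi.filter (fun A => ¬ ∀ j, dd (A j) = 0),
        ee (-(W A)) * (∑ k ∈ Finset.Icc 1 N, (ee (β A))^k)).re) := by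
      have : (((∑ k ∈ Finset.Icc 1 N, hf k) - (good.card : ℝ) * N : ℝ) : ℂ)
          = ∑ A ∈ Pi.filter (fun A => ¬ ∀ j, dd (A j) = 0),
            ee (-(W A)) * (∑ k ∈ Finset.Icc 1 N, (ee (β A))^k) := by
        push_cast
        rw [sub_eq_iff_eq_add]
        push_cast at h0
        rw [h0]
        ring
      rw [← this, Complex.ofReal_re]
    rw [heq]
    calc |(∑ A ∈ Pi.filter (fun A => ¬ ∀ j, dd (A j) = 0),
        ee (-(W A)) * (∑ k ∈ Finset.Icc 1 N, (ee (β A))^k)).re|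
        ≤ ‖∑ A ∈ Pi.filter (fun A => ¬ ∀ j, dd (A j) = 0),
        ee (-(W A)) * (∑ k ∈ Finset.Icc 1 N, (ee (β A))^k)‖ := Complex.abs_re_le_norm _
    _ ≤ Rstar := hbad
  -- counting
  have hgood_card : good.card = ((P.filter (fun q => σf q.1 = σf q.2)).card)^s := by
    have hgeq : good = Fintype.piFinset (fun _ : Fin s => P.filter (fun q => σf q.1 = σf q.2)) := by
      ext A
      rw [hgooddef, Finset.mem_filter, Fintype.mem_piFinset]
      simp only [Fintype.mem_piFinset, Finset.mem_filter]
      constructor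
      · rintro ⟨h1, h2⟩
        intro j
        refine ⟨h1 j, ?_⟩
        have := h2 j
        rw [hdddef] at this
        simp only [sub_eq_zero] at this
        exact_mod_cast this
      · intro h1
        refine ⟨fun j => (h1 j).1, fun j => ?_⟩
        rw [hdddef]
        simp only [sub_eq_zero]
        exact_mod_cast (h1 j).2
    rw [hgeq, Fintype.card_piFinset]
    simp
  have hcount := count_pairs m n
  rw [← hGdef, ← hPdef] at hcount
  have hQpos : (0:ℝ) < (m:ℝ)*n+1 := by positivity
  set cF : ℕ := (P.filter (fun q => σf q.1 = σf q.2)).card with hcFdef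
  have hcount2 : ((n:ℝ)+1)^(2*m) ≤ (cF:ℝ) * ((m:ℝ)*n+1) := by
    calc ((n:ℝ)+1)^(2*m) = (((n:ℝ)+1)^m)^2 := by rw [← pow_mul, mul_comm]
    _ ≤ (cF:ℝ) * (((m*n+1 : ℕ)) : ℝ) := hcount
    _ = (cF:ℝ) * ((m:ℝ)*n+1) := by push_cast; ring
  have hcF_lower : ((n:ℝ)+1)^(2*m) / ((m:ℝ)*n+1) ≤ (cF:ℝ) := by
    rw [div_le_iff₀ hQpos]
    exact hcount2
  have hgc_lower : (((n:ℝ)+1)^(2*m) / ((m:ℝ)*n+1))^s ≤ ((good.card : ℕ) : ℝ) := by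
    rw [hgood_card]
    push_cast at hcF_lower ⊢
    apply pow_le_pow_left₀ (by positivity) hcF_lower
  -- U < good.card
  have hXpos : (0:ℝ) < ((n:ℝ)+1)^(2*m) := by positivity
  have hUlt : U < ((good.card : ℕ) : ℝ) := by
    refine lt_of_lt_of_le ?_ hgc_lower
    obtain ⟨s1, hss⟩ : ∃ s1, s = s1 + 1 := ⟨s-1, by omega⟩
    have l1 : ((1/(2*ε))^2)^m = 1/((2*ε)^(2*m)) := by
      rw [div_pow, one_pow, div_pow, one_pow, ← pow_mul]
    have l2 : (((n:ℝ)+1)^2)^(m*s1) = (((n:ℝ)+1)^(2*m))^s1 := by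
      rw [← pow_mul, ← pow_mul]
      congr 1
      ring
    have hU_eq : U = (((n:ℝ)+1)^(2*m))^s1 / ((2*ε)^(2*m)) := by
      rw [hUdef, hss]
      simp only [Nat.add_sub_cancel]
      rw [l1, l2, one_div, inv_mul_eq_div]
    have e1 : (((n:ℝ)+1)^(2*m)/((m:ℝ)*n+1))^s
        = ((((n:ℝ)+1)^(2*m))^s1 * ((n:ℝ)+1)^(2*m)) / ((m:ℝ)*n+1)^s := by
      rw [div_pow, hss, pow_succ]
    rw [hU_eq, e1, div_lt_div_iff₀ hEpos (by positivity)]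
    calc (((n:ℝ)+1)^(2*m))^s1 * ((m:ℝ)*n+1)^s
        < (((n:ℝ)+1)^(2*m))^s1 * (((2*ε)*((n:ℝ)+1))^(2*m)) :=
          mul_lt_mul_of_pos_left key (by positivity)
    _ = (((n:ℝ)+1)^(2*m))^s1 * ((n:ℝ)+1)^(2*m) * (2*ε)^(2*m) := by
          rw [mul_pow]; ring
  -- final contradiction
  have hstep : ∀ N : ℕ, (N:ℝ) * (((good.card : ℕ):ℝ) - U) ≤ Rstar := by
    intro N
    have hub : (∑ k ∈ Finset.Icc 1 N, hf k) ≤ (N:ℝ) * U := by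
      calc (∑ k ∈ Finset.Icc 1 N, hf k) ≤ ∑ _k ∈ Finset.Icc 1 N, U := by
            apply Finset.sum_le_sum
            intro k hk
            exact hupp k (Finset.mem_Icc.mp hk).1
      _ = (N:ℝ) * U := by
            rw [Finset.sum_const, Nat.card_Icc, nsmul_eq_mul]
            norm_num
    have hlb := main2 N
    rw [abs_le] at hlb
    nlinarith [hlb.1, hlb.2]
  obtain ⟨N, hN⟩ := exists_nat_gt (Rstar / (((good.card : ℕ):ℝ) - U))
  have hpos : 0 < ((good.card : ℕ):ℝ) - U := by linarith
  rw [div_lt_iff₀ hpos] at hN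
  have := hstep N
  linarith

end KronTools

lemma sigmaP_chi (p : ℕ) (hp : 0 < p) (c : ℝ) (hc0 : 0 < c) (hc1 : c < 1)
    (hint : ∀ z : ℤ, (p:ℝ) * c ≠ (z:ℝ)) :
    SigmaP p (chiFn c) = ((⌊(p:ℝ)*c⌋ : ℤ) : ℝ) := by
  have hppos : (0:ℝ) < (p:ℝ) := by exact_mod_cast hp
  have hfl0 : (0:ℤ) ≤ ⌊(p:ℝ)*c⌋ := Int.floor_nonneg.mpr (by positivity)
  set F : ℕ := (⌊(p:ℝ)*c⌋).toNat with hFdef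
  have hFr : ((F:ℝ)) = ((⌊(p:ℝ)*c⌋:ℤ) : ℝ) := by
    rw [hFdef]; exact_mod_cast Int.toNat_of_nonneg hfl0
  have h1 : (F:ℝ) < (p:ℝ)*c := by
    rw [hFr]
    exact lt_of_le_of_ne (Int.floor_le _) (fun hh => hint _ hh.symm)
  have h2 : (p:ℝ)*c < (F:ℝ) + 1 := by
    rw [hFr]
    exact_mod_cast Int.lt_floor_add_one ((p:ℝ)*c)
  have hF1p : F + 1 ≤ p := by
    have : (F:ℝ) < (p:ℝ) := lt_trans h1 (by nlinarith)
    have : F < p := by exact_mod_cast this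
    omega
  rw [SigmaP, ← Finset.sum_Ico_consecutive _ (by omega : 1 ≤ F+1) hF1p]
  have hfirst : ∀ i ∈ Finset.Ico 1 (F+1), chiFn c ((i:ℝ)/(p:ℝ)) = 1 := by
    intro i hi
    rw [Finset.mem_Ico] at hi
    have : (i:ℝ) ≤ F := by exact_mod_cast Nat.lt_succ_iff.mp hi.2
    have hlt : (i:ℝ)/(p:ℝ) < c := by
      rw [div_lt_iff₀ hppos]
      nlinarith
    rw [chiFn, if_pos hlt]
  have hsecond : ∀ i ∈ Finset.Ico (F+1) p, chiFn c ((i:ℝ)/(p:ℝ)) = 0 := by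
    intro i hi
    rw [Finset.mem_Ico] at hi
    have : (F:ℝ) + 1 ≤ (i:ℝ) := by exact_mod_cast hi.1
    have hgt : c < (i:ℝ)/(p:ℝ) := by
      rw [lt_div_iff₀ hppos]
      nlinarith
    rw [chiFn, if_neg (by linarith), if_neg (by intro hh; linarith [hh ▸ hgt])]
  rw [Finset.sum_congr rfl hfirst, Finset.sum_congr rfl hsecond]
  rw [Finset.sum_const, Finset.sum_const, Nat.card_Ico]
  simp [hFr.symm]

lemma sigmaP_SFn (p : ℕ) (hp : 0 < p) (a : ℝ) (ha0 : 0 < a) (ha1 : a < 1/2)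
    (hint : ∀ z : ℤ, (p:ℝ) * a ≠ (z:ℝ)) :
    SigmaP p (SFn a) = (p:ℝ) - 1 - 2*((⌊(p:ℝ)*a⌋:ℤ):ℝ) := by
  have hint' : ∀ z : ℤ, (p:ℝ)*(1-a) ≠ (z:ℝ) := by
    intro z hz
    apply hint ((p:ℤ) - z)
    push_cast
    nlinarith [hz]
  have hceil : ⌈(p:ℝ)*a⌉ = ⌊(p:ℝ)*a⌋ + 1 := by
    have hlt : ((⌊(p:ℝ)*a⌋:ℤ):ℝ) < (p:ℝ)*a :=
      lt_of_le_of_ne (Int.floor_le _) (fun hh => hint _ hh.symm)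
    have h1 : ⌈(p:ℝ)*a⌉ ≤ ⌊(p:ℝ)*a⌋ + 1 := by
      apply Int.ceil_le.mpr
      push_cast
      linarith [Int.lt_floor_add_one ((p:ℝ)*a)]
    have h2 : ⌊(p:ℝ)*a⌋ < ⌈(p:ℝ)*a⌉ := by
      have h3 := Int.le_ceil ((p:ℝ)*a)
      have : ((⌊(p:ℝ)*a⌋:ℤ):ℝ) < ((⌈(p:ℝ)*a⌉:ℤ):ℝ) := lt_of_lt_of_le hlt h3
      exact_mod_cast this
    omega
  have hfloor1 : ⌊(p:ℝ)*(1-a)⌋ = (p:ℤ) - ⌊(p:ℝ)*a⌋ - 1 := by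
    rw [show (p:ℝ)*(1-a) = (-((p:ℝ)*a)) + ((p:ℤ):ℝ) by push_cast; ring]
    rw [Int.floor_add_intCast, Int.floor_neg, hceil]
    ring
  have hsplit : SigmaP p (SFn a) = SigmaP p (chiFn (1-a)) - SigmaP p (chiFn a) := by
    rw [SigmaP, SigmaP, SigmaP, ← Finset.sum_sub_distrib]
    exact Finset.sum_congr rfl (fun i _ => rfl)
  rw [hsplit, sigmaP_chi p hp (1-a) (by linarith) (by linarith) hint',
    sigmaP_chi p hp a ha0 (by linarith) hint, hfloor1]
  push_cast
  ring

lemma sigmaP_linear (p : ℕ) {r : ℕ} (c : Fin r → ℝ) (f : Fin r → ℝ → ℝ) :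
    SigmaP p (fun x => ∑ i, c i * f i x) = ∑ i, c i * SigmaP p (f i) := by
  rw [SigmaP, Finset.sum_comm]
  apply Finset.sum_congr rfl
  intro i _
  rw [SigmaP, Finset.mul_sum]

set_option maxHeartbeats 1000000 in
/-- if `σ = ∑ cᵢ S_{aᵢ}` (with `a₁,…,a_s` irrational, the rest rational, all
distinct, all `cᵢ ≠ 0`) satisfies `Σ_p(σ) = 0` for every `p > 1` coprime to `m` and `m+1`,
then `a₁, …, a_s, 1` are linearly dependent over `ℚ`. -/
theorem stmt_4 (m : ℕ) (hm : 1 ≤ m) (r s : ℕ) (hs : 1 ≤ s) (hsr : s ≤ r)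
    (a : Fin r → ℝ) (hainj : Function.Injective a)
    (hmem : ∀ i, a i ∈ Set.Ioo (0 : ℝ) (1 / 2))
    (hirr : ∀ i : Fin r, (i : ℕ) < s → Irrational (a i))
    (hrat : ∀ i : Fin r, s ≤ (i : ℕ) → ∃ q : ℚ, a i = (q : ℝ))
    (c : Fin r → ℝ) (hc : ∀ i, c i ≠ 0)
    (h : ∀ p : ℕ, 1 < p → Nat.Coprime p m → Nat.Coprime p (m + 1) →
      SigmaP p (fun x => ∑ i, c i * SFn (a i) x) = 0) :
    ∃ (q : Fin s → ℚ) (q0 : ℚ), ¬ (q0 = 0 ∧ ∀ i, q i = 0) ∧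
      (∑ i : Fin s, (q i : ℝ) * a (Fin.castLE hsr i)) + (q0 : ℝ) = 0 := by
  classical
  by_contra hcon
  push_neg at hcon
  set ι : Fin s → Fin r := Fin.castLE hsr with hι
  -- common denominator
  have hDex : ∃ D : ℕ, 0 < D ∧ ∀ i : Fin r, s ≤ (i:ℕ) → ∃ z : ℤ, (D:ℝ) * a i = (z:ℝ) := by
    set qs : Fin r → ℚ := fun i => if hh : s ≤ (i:ℕ) then (hrat i hh).choose else 0 with hqs
    refine ⟨∏ i, (qs i).den, Finset.prod_pos (fun i _ => (qs i).pos), ?_⟩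
    intro i hi
    have hai : a i = ((qs i : ℚ) : ℝ) := by
      rw [hqs]
      simp only [dif_pos hi]
      exact (hrat i hi).choose_spec
    obtain ⟨e, he⟩ : (qs i).den ∣ ∏ i, (qs i).den := Finset.dvd_prod_of_mem _ (Finset.mem_univ i)
    refine ⟨e * (qs i).num, ?_⟩
    rw [hai]
    have hq : ((∏ i, (qs i).den : ℕ) : ℚ) * (qs i) = ((e * (qs i).num : ℤ) : ℚ) := by
      rw [he]
      push_cast
      rw [mul_comm ((qs i).den : ℚ) (e:ℚ), mul_assoc, mul_comm ((qs i).den:ℚ) (qs i),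
        Rat.mul_den_eq_num]
    calc ((∏ i, (qs i).den : ℕ) : ℝ) * ((qs i : ℚ):ℝ)
        = (((((∏ i, (qs i).den : ℕ) : ℚ)) * (qs i) : ℚ) : ℝ) := by push_cast; ring
    _ = (((e * (qs i).num : ℤ) : ℚ) : ℝ) := by rw [hq]
    _ = ((e * (qs i).num : ℤ) : ℝ) := by push_cast; ring
  obtain ⟨D, hD0, hDint⟩ := hDex
  set M : ℕ := m * (m+1) * D with hM
  have hM0 : 0 < M := by
    apply Nat.mul_pos (Nat.mul_pos (by omega) (by omega)) hD0
  have hMa : ∀ i : Fin r, s ≤ (i:ℕ) → ∃ z : ℤ, (M:ℝ) * a i = (z:ℝ) := by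
    intro i hi
    obtain ⟨z, hz⟩ := hDint i hi
    refine ⟨(m*(m+1) : ℕ) * z, ?_⟩
    have : (M:ℝ) = ((m*(m+1):ℕ):ℝ) * (D:ℝ) := by rw [hM]; push_cast; ring
    rw [this, mul_assoc, hz]
    push_cast
    ring
  -- (1+kM) * a i is never an integer
  have hpnotint : ∀ (k : ℕ) (i : Fin r), ∀ z : ℤ, ((1 + k*M : ℕ):ℝ) * a i ≠ (z:ℝ) := by
    intro k i z hz
    rcases lt_or_ge (i:ℕ) s with his | his
    · apply hirr i his
      have hp0 : ((1 + k*M : ℕ):ℝ) ≠ 0 := by positivity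
      refine ⟨(z : ℚ) / ((1 + k*M : ℕ) : ℚ), ?_⟩
      have : a i = (z:ℝ) / ((1 + k*M : ℕ):ℝ) := by
        rw [eq_div_iff hp0, mul_comm]
        exact hz
      rw [this]
      push_cast
      ring
    · obtain ⟨z0, hz0⟩ := hMa i his
      have e1 : a i = ((z - k*z0 : ℤ):ℝ) := by
        have e2 : a i = ((1 + k*M:ℕ):ℝ) * a i - (k:ℝ) * ((M:ℝ) * a i) := by
          push_cast
          ring
        rw [e2, hz, hz0]
        push_cast
        ring
      obtain ⟨hlo, hhi⟩ := hmem i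
      rw [e1] at hlo hhi
      have h1 : 0 < (z - k*z0 : ℤ) := by exact_mod_cast hlo
      have h2 : (z - k*z0 : ℤ) < 1 := by
        have : ((z - k*z0 : ℤ):ℝ) < 1 := by linarith
        exact_mod_cast this
      omega
  -- coprimality
  have hcop : ∀ k : ℕ, Nat.Coprime (1 + k*M) m ∧ Nat.Coprime (1 + k*M) (m+1) := by
    intro k
    constructor
    · have e1 : 1 + k*M = 1 + (k*((m+1)*D))*m := by rw [hM]; ring
      rw [e1, Nat.coprime_add_mul_right_left]
      exact Nat.coprime_one_left m
    · have e1 : 1 + k*M = 1 + (k*(m*D))*(m+1) := by rw [hM]; ring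
      rw [e1, Nat.coprime_add_mul_right_left]
      exact Nat.coprime_one_left (m+1)
  -- the master equation
  have hEq : ∀ k : ℕ, 1 ≤ k →
      ∑ i, c i * (((1 + k*M:ℕ):ℝ) - 1 - 2*((⌊((1 + k*M:ℕ):ℝ) * a i⌋:ℤ):ℝ)) = 0 := by
    intro k hk
    have hkM : 0 < k*M := Nat.mul_pos hk hM0
    have hp1 : 1 < 1 + k*M := by omega
    have hh := h (1+k*M) hp1 (hcop k).1 (hcop k).2
    rw [sigmaP_linear] at hh
    rw [← hh]
    apply Finset.sum_congr rfl
    intro i _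
    congr 1
    exact (sigmaP_SFn (1+k*M) (by omega) (a i) (hmem i).1 (hmem i).2 (hpnotint k i)).symm
  -- rewrite with fractional parts
  set Ac : ℝ := ∑ i, c i * (1 - 2*a i) with hAc
  set B : ℝ := ∑ i, c i with hB
  set F : ℕ → ℝ := fun k => ∑ i, c i * Int.fract (((1 + k*M:ℕ):ℝ) * a i) with hF
  have hfracEq : ∀ k : ℕ, 1 ≤ k → ((1+k*M:ℕ):ℝ) * Ac - B + 2 * F k = 0 := by
    intro k hk
    rw [← hEq k hk]
    rw [hAc, hB, hF, Finset.mul_sum, Finset.mul_sum, ← Finset.sum_sub_distrib,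
      ← Finset.sum_add_distrib]
    apply Finset.sum_congr rfl
    intro i _
    have hff : ((⌊((1 + k*M:ℕ):ℝ) * a i⌋:ℤ):ℝ)
        = ((1 + k*M:ℕ):ℝ) * a i - Int.fract (((1 + k*M:ℕ):ℝ) * a i) :=
      (Int.self_sub_fract _).symm
    rw [hff]
    ring
  set Kk : ℝ := ∑ i, |c i| with hKk
  have hFbound : ∀ k : ℕ, |F k| ≤ Kk := by
    intro k
    rw [hF, hKk]
    refine le_trans (Finset.abs_sum_le_sum_abs _ _) (Finset.sum_le_sum ?_)
    intro i _
    rw [abs_mul]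
    have h1 : |Int.fract (((1 + k*M:ℕ):ℝ) * a i)| ≤ 1 := by
      rw [abs_of_nonneg (Int.fract_nonneg _)]
      exact le_of_lt (Int.fract_lt_one _)
    nlinarith [abs_nonneg (c i)]
  have hAc0 : Ac = 0 := by
    by_contra hA
    have hAabs : 0 < |Ac| := abs_pos.mpr hA
    obtain ⟨k0, hk0⟩ := exists_nat_gt ((|B| + 2*Kk)/|Ac|)
    set k := k0 + 1
    have hP : ((1+k*M:ℕ):ℝ) ≥ (k:ℝ) := by
      have : k ≤ 1 + k*M := by
        calc k ≤ k * M := Nat.le_mul_of_pos_right k hM0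
        _ ≤ 1 + k*M := by omega
      exact_mod_cast this
    have hkk0 : (k0:ℝ) < (k:ℝ) := by
      simp only [k]
      push_cast
      linarith
    have heq := hfracEq k (by omega)
    have h1 : ((1+k*M:ℕ):ℝ) * |Ac| ≤ |B| + 2*Kk := by
      have h2 : ((1+k*M:ℕ):ℝ) * Ac = B - 2 * F k := by linarith
      calc ((1+k*M:ℕ):ℝ) * |Ac| = |((1+k*M:ℕ):ℝ) * Ac| := by
            rw [abs_mul, abs_of_nonneg (by positivity : (0:ℝ) ≤ ((1+k*M:ℕ):ℝ))]
      _ = |B - 2*F k| := by rw [h2]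
      _ ≤ |B| + 2*|F k| := by
            refine le_trans (abs_sub _ _) ?_
            rw [abs_mul]
            norm_num
      _ ≤ |B| + 2*Kk := by linarith [hFbound k]
    rw [div_lt_iff₀ hAabs] at hk0
    nlinarith
  have hFconst : ∀ k : ℕ, 1 ≤ k → F k = B / 2 := by
    intro k hk
    have := hfracEq k hk
    rw [hAc0, mul_zero] at this
    linarith

  -- reindexing
  have himg : (Finset.univ : Finset (Fin s)).image ι
      = Finset.univ.filter (fun i : Fin r => (i:ℕ) < s) := by
    ext i
    simp only [Finset.mem_image, Finset.mem_filter, Finset.mem_univ, true_and]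
    constructor
    · rintro ⟨j, -, rfl⟩
      simpa [hι] using j.2
    · intro hi
      refine ⟨⟨(i:ℕ), hi⟩, ?_⟩
      rw [hι]
      ext
      simp
  have hreindex : ∀ f : Fin r → ℝ,
      ∑ i ∈ Finset.univ.filter (fun i : Fin r => (i:ℕ) < s), f i = ∑ j : Fin s, f (ι j) := by
    intro f
    rw [← himg]
    apply Finset.sum_image
    intro x _ y _ hxy
    have hval : (x:ℕ) = (y:ℕ) := by
      have := congrArg Fin.val hxy
      simpa [hι] using this
    exact Fin.ext hval
  have hfrat : ∀ (k : ℕ) (i : Fin r), s ≤ (i:ℕ) →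
      Int.fract (((1+k*M:ℕ):ℝ) * a i) = a i := by
    intro k i hi
    obtain ⟨z0, hz0⟩ := hMa i hi
    have e1 : ((1+k*M:ℕ):ℝ) * a i = a i + ((k*z0 : ℤ):ℝ) := by
      have e2 : ((1+k*M:ℕ):ℝ) * a i = a i + (k:ℝ) * ((M:ℝ) * a i) := by push_cast; ring
      rw [e2, hz0]
      push_cast
      ring
    rw [e1, Int.fract_add_intCast,
      Int.fract_eq_self.mpr ⟨le_of_lt (hmem i).1, by linarith [(hmem i).2]⟩]
  set C : ℝ := B/2 - ∑ i ∈ Finset.univ.filter (fun i : Fin r => ¬ (i:ℕ) < s), c i * a i with hC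
  have hG : ∀ k : ℕ, 1 ≤ k →
      ∑ j : Fin s, c (ι j) * Int.fract (((1+k*M:ℕ):ℝ) * a (ι j)) = C := by
    intro k hk
    have hsplit := Finset.sum_filter_add_sum_filter_not Finset.univ
      (fun i : Fin r => (i:ℕ) < s) (fun i => c i * Int.fract (((1+k*M:ℕ):ℝ) * a i))
    have h2 : ∑ i ∈ Finset.univ.filter (fun i : Fin r => ¬ (i:ℕ) < s),
        c i * Int.fract (((1+k*M:ℕ):ℝ) * a i)
        = ∑ i ∈ Finset.univ.filter (fun i : Fin r => ¬ (i:ℕ) < s), c i * a i := by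
      apply Finset.sum_congr rfl
      intro i hi
      rw [Finset.mem_filter] at hi
      rw [hfrat k i (by omega)]
    have h3 := hFconst k hk
    rw [hF] at h3
    simp only at h3
    rw [h2] at hsplit
    rw [← hreindex (fun i => c i * Int.fract (((1+k*M:ℕ):ℝ) * a i)), hC]
    linarith [hsplit, h3]
  -- nondegeneracy for kron
  have hbkr : ∀ d : Fin s → ℤ, d ≠ 0 → ∀ z : ℤ,
      (∑ j, (d j:ℝ) * ((M:ℝ) * a (ι j))) ≠ (z:ℝ) := by
    intro d hd z hz
    obtain ⟨j0, hj0⟩ := Function.ne_iff.mp hd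
    refine hcon (fun j => (M:ℚ) * (d j : ℚ)) (-(z:ℚ)) ?_ ?_
    · intro _
      refine ⟨j0, ?_⟩
      intro hj
      have hM0' : ((M:ℚ)) ≠ 0 := by
        simp only [ne_eq, Nat.cast_eq_zero]
        omega
      have : (d j0 : ℚ) = 0 := by
        rcases mul_eq_zero.mp hj with h' | h'
        · exact absurd h' hM0'
        · exact h'
      exact hj0 (by exact_mod_cast this)
    · have e1 : ∑ i : Fin s, (((M:ℚ) * (d i : ℚ) : ℚ):ℝ) * a (ι i)
          = ∑ j : Fin s, (d j:ℝ) * ((M:ℝ) * a (ι j)) := by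
        apply Finset.sum_congr rfl
        intro j _
        push_cast
        ring
      rw [hι] at e1 ⊢
      rw [e1, hz]
      push_cast
      ring
  have hfr01 : ∀ (k : ℕ) (j : Fin s), 0 < Int.fract (((1+k*M:ℕ):ℝ) * a (ι j)) ∧
      Int.fract (((1+k*M:ℕ):ℝ) * a (ι j)) < 1 := by
    intro k j
    refine ⟨Int.fract_pos.mpr ?_, Int.fract_lt_one _⟩
    intro hfl
    exact hpnotint k (ι j) ⌊((1+k*M:ℕ):ℝ) * a (ι j)⌋ hfl
  set Pm : ℝ := ∑ j : Fin s, max (c (ι j)) 0 with hPm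
  have hne : (Finset.univ : Finset (Fin s)).Nonempty := by
    have : Nonempty (Fin s) := ⟨⟨0, hs⟩⟩
    exact Finset.univ_nonempty
  have hCP : C < Pm := by
    rw [← hG 1 le_rfl, hPm]
    apply Finset.sum_lt_sum_of_nonempty hne
    intro j _
    obtain ⟨hf0, hf1⟩ := hfr01 1 j
    rcases (hc (ι j)).lt_or_gt with hneg | hpos
    · calc c (ι j) * Int.fract (((1+1*M:ℕ):ℝ) * a (ι j)) < 0 :=
          mul_neg_of_neg_of_pos hneg hf0
      _ ≤ max (c (ι j)) 0 := le_max_right _ _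
    · calc c (ι j) * Int.fract (((1+1*M:ℕ):ℝ) * a (ι j)) < c (ι j) * 1 :=
          mul_lt_mul_of_pos_left hf1 hpos
      _ = max (c (ι j)) 0 := by rw [mul_one, max_eq_left (le_of_lt hpos)]
  set Kq : ℝ := ∑ j : Fin s, |c (ι j)| with hKq
  have hKq0 : 0 ≤ Kq := Finset.sum_nonneg (fun j _ => abs_nonneg _)
  set ε : ℝ := min ((Pm - C)/(2*Kq + 1)) (1/8) with hεdef
  have hε0 : 0 < ε := lt_min (div_pos (by linarith) (by linarith)) (by norm_num)
  have hε18 : ε ≤ 1/8 := min_le_right _ _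
  have hεPC : ε * (2*Kq + 1) ≤ Pm - C := by
    calc ε * (2*Kq+1) ≤ ((Pm - C)/(2*Kq+1)) * (2*Kq+1) :=
          mul_le_mul_of_nonneg_right (min_le_left _ _) (by linarith)
    _ = Pm - C := div_mul_cancel₀ _ (by linarith)
  set t : Fin s → ℝ := fun j => if 0 < c (ι j) then 1 - ε else ε with ht
  obtain ⟨k, hk1, hclose⟩ := kron s hs (fun j => (M:ℝ) * a (ι j))
    (fun j => t j - a (ι j)) hbkr ε hε0 (by linarith)
  have hGk := hG k hk1
  have hterm : ∀ j ∈ (Finset.univ : Finset (Fin s)),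
      max (c (ι j)) 0 - 2*ε*|c (ι j)| <
      c (ι j) * Int.fract (((1+k*M:ℕ):ℝ) * a (ι j)) := by
    intro j _
    obtain ⟨z, hz⟩ := hclose j
    set x : ℝ := ((1+k*M:ℕ):ℝ) * a (ι j) with hx
    have hxe : x = a (ι j) + (k:ℝ) * ((M:ℝ) * a (ι j)) := by rw [hx]; push_cast; ring
    have hz' : |x - t j - (z:ℝ)| < ε := by
      rw [hxe]
      convert hz using 2
      ring
    rw [abs_lt] at hz'
    have htb : ε ≤ t j ∧ t j ≤ 1 - ε := by
      rw [ht]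
      simp only
      split
      · constructor <;> linarith
      · constructor <;> linarith
    have hxz0 : 0 ≤ x - (z:ℝ) := by linarith [htb.1, hz'.1]
    have hxz1 : x - (z:ℝ) < 1 := by linarith [htb.2, hz'.2]
    have hfr : Int.fract x = x - (z:ℝ) := by
      have h1 : Int.fract (x - (z:ℝ)) = x - (z:ℝ) := Int.fract_eq_self.mpr ⟨hxz0, hxz1⟩
      have h2 : Int.fract (x - (z:ℝ)) = Int.fract x := by
        rw [show x - (z:ℝ) = x + ((-z:ℤ):ℝ) by push_cast; ring, Int.fract_add_intCast]
      rw [← h2, h1]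
    rw [hfr]
    rcases (hc (ι j)).lt_or_gt with hneg | hpos
    · have htj : t j = ε := by rw [ht]; simp only; rw [if_neg (not_lt.mpr (le_of_lt hneg))]
      have hxu : x - (z:ℝ) < 2*ε := by rw [htj] at hz'; linarith [hz'.2]
      have hmax : max (c (ι j)) 0 = 0 := max_eq_right (le_of_lt hneg)
      have habs : |c (ι j)| = -c (ι j) := abs_of_neg hneg
      rw [hmax, habs]
      have hprod := mul_lt_mul_of_neg_left hxu hneg
      linarith [hprod]
    · have htj : t j = 1 - ε := by rw [ht]; simp only; rw [if_pos hpos]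
      have hxl : 1 - 2*ε < x - (z:ℝ) := by rw [htj] at hz'; linarith [hz'.1]
      have hmax : max (c (ι j)) 0 = c (ι j) := max_eq_left (le_of_lt hpos)
      have habs : |c (ι j)| = c (ι j) := abs_of_pos hpos
      rw [hmax, habs]
      have hprod := mul_lt_mul_of_pos_left hxl hpos
      linarith [hprod]
  have hsum := Finset.sum_lt_sum_of_nonempty hne hterm
  have hL : ∑ j : Fin s, (max (c (ι j)) 0 - 2*ε*|c (ι j)|) = Pm - 2*ε*Kq := by
    rw [Finset.sum_sub_distrib, ← Finset.mul_sum, hPm, hKq]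
  rw [hL, hGk] at hsum
  linarith [hεPC, hε0]
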